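/- Let q be a power of an odd prime, let K be a finite field with q² elements, and let H be the subgroup of GL_2(K) consisting of all A with (det A)^{q+1} = 1. If A ∈ H satisfies (A − I)² = 0, then there exists g ∈ H with g A g⁻¹ = A². -/

import Mathlib

lemma two_pow_char_pow {K : Type} [Field K] (p k : ℕ) [Fact p.Prime] [CharP K p] :
    (2 : K) ^ (p ^ k) = 2 := by
  induction k with
  | zero => simp
  | succ n ih =>
      rw [pow_succ, pow_mul, ih, show (2 : K) = 1 + 1 by norm_num, add_pow_char]
      norm_num

theorem twisted_levi_unipotent_conj_sq
    {q : ℕ} (hq : ∃ p k : ℕ, p.Prime ∧ Odd p ∧ 0 < k ∧ q = p ^ k)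
    {K : Type} [Field K] [Fintype K] (hK : Fintype.card K = q ^ 2)
    (A : Matrix.GeneralLinearGroup (Fin 2) K)
    (hdet : (A : Matrix (Fin 2) (Fin 2) K).det ^ (q + 1) = 1)
    (hA : ((A : Matrix (Fin 2) (Fin 2) K) - 1) ^ 2 = 0) :
    ∃ g : Matrix.GeneralLinearGroup (Fin 2) K,
      (g : Matrix (Fin 2) (Fin 2) K).det ^ (q + 1) = 1 ∧ g * A * g⁻¹ = A ^ 2 := by
  obtain ⟨p, k, hp, hpodd, hk, hq'⟩ := hq
  haveI : DecidableEq K := Classical.decEq K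
  haveI : Fact p.Prime := ⟨hp⟩
  -- the characteristic of K is p
  have hchar : CharP K p := by
    set p₀ := ringChar K with hp₀
    haveI : CharP K p₀ := ringChar.charP K
    obtain ⟨n, hp₀p, hcard⟩ := FiniteField.card K p₀
    have he : p ^ (2 * k) = p₀ ^ (n : ℕ) := by
      rw [← hcard, hK, hq', ← pow_mul, mul_comm]
    have hdvd : p₀ ∣ p := by
      refine hp₀p.dvd_of_dvd_pow (n := 2 * k) ?_
      rw [he]; exact dvd_pow_self p₀ n.2.ne'
    have : p₀ = p := ((Nat.prime_dvd_prime_iff_eq hp₀p hp).mp hdvd)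
    rw [← this]; infer_instance
  haveI := hchar
  have hpne2 : p ≠ 2 := by
    rintro rfl
    exact (Nat.not_even_iff_odd.mpr hpodd) even_two
  have h2ne : (2 : K) ≠ 0 := by
    intro h
    have : (p : ℕ) ∣ 2 :=
      (CharP.cast_eq_zero_iff K p 2).mp (by exact_mod_cast h)
    exact hpne2 ((Nat.prime_dvd_prime_iff_eq hp Nat.prime_two).mp this)
  have h2q : (2 : K) ^ q = 2 := by rw [hq']; exact two_pow_char_pow p k
  have hq1 : 1 ≤ q := by rw [hq']; exact Nat.one_le_pow _ _ hp.pos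
  have h2q1 : (2 : K) ^ (q - 1) = 1 := by
    have h : (2 : K) ^ (q - 1) * 2 = 2 := by
      rw [← pow_succ, Nat.sub_add_cancel hq1, h2q]
    field_simp at h
    exact h
  -- find d with d ^ (q+1) = 2⁻¹
  obtain ⟨ζ, hζ⟩ := IsCyclic.exists_generator (α := Kˣ)
  have horder : orderOf ζ = q ^ 2 - 1 := by
    rw [orderOf_eq_card_of_forall_mem_zpowers hζ, Nat.card_eq_fintype_card,
      Fintype.card_units, hK]
  set u : Kˣ := (Units.mk0 (2 : K) h2ne)⁻¹ with hu_def
  have hu : u ^ (q - 1) = 1 := by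
    ext
    simp [hu_def, inv_pow, h2q1]
  obtain ⟨m, hm⟩ := (mem_powers_iff_mem_zpowers.mpr (hζ u))
  have hm' : ζ ^ m = u := hm
  have hζm : ζ ^ (m * (q - 1)) = 1 := by rw [pow_mul, hm', hu]
  have hdvd : (q + 1) * (q - 1) ∣ m * (q - 1) := by
    have := orderOf_dvd_of_pow_eq_one hζm
    rwa [horder, Nat.sq_sub_sq q 1] at this
  have hq3 : 3 ≤ q := by
    have h2p : 2 ≤ p := hp.two_le
    have h3p : 3 ≤ p := by omega
    calc 3 ≤ p := h3p
    _ ≤ p ^ k := Nat.le_self_pow (by omega) p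
    _ = q := hq'.symm
  have hdvd' : (q + 1) ∣ m :=
    Nat.dvd_of_mul_dvd_mul_right (by omega : 0 < q - 1) hdvd
  obtain ⟨t, ht⟩ := hdvd'
  set d : K := ((ζ ^ t : Kˣ) : K) with hd_def
  have hdpow : d ^ (q + 1) = (2 : K)⁻¹ := by
    have : (ζ ^ t) ^ (q + 1) = u := by
      rw [← pow_mul, mul_comm, ← ht, hm']
    have := congrArg Units.val this
    simpa [hu_def, hd_def] using this
  have hdne : d ≠ 0 := Units.ne_zero _
  have hdetval : ((2 : K) * d ^ 2) ^ (q + 1) = 1 := by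
    have expand : ((2 : K) * d ^ 2) ^ (q + 1) = 2 ^ (q + 1) * (d ^ (q + 1)) ^ 2 := by
      ring
    rw [expand, hdpow, pow_succ, h2q]
    field_simp
  -- matrix part
  set M : Matrix (Fin 2) (Fin 2) K := (A : Matrix (Fin 2) (Fin 2) K) with hM_def
  have hA' : (M - 1) * (M - 1) = 0 := by rw [← sq]; exact hA
  have e00 := congrFun (congrFun hA' 0) 0
  have e10 := congrFun (congrFun hA' 1) 0
  have e11 := congrFun (congrFun hA' 1) 1
  simp [Matrix.mul_apply, Fin.sum_univ_two, Matrix.sub_apply, Matrix.one_apply] at e00 e10 e11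
  by_cases hc : M 1 0 = 0
  · have ha : M 0 0 = 1 := by
      have h1 : (M 0 0 - 1) * (M 0 0 - 1) = 0 := by
        have := e00; rw [hc] at this; simpa using this
      have := mul_self_eq_zero.mp h1
      linear_combination this
    have hb : M 1 1 = 1 := by
      have h1 : (M 1 1 - 1) * (M 1 1 - 1) = 0 := by
        have := e11; rw [hc] at this; simpa using this
      have := mul_self_eq_zero.mp h1
      linear_combination this
    set gm : Matrix (Fin 2) (Fin 2) K := !![2*d, 0; 0, d] with hgm
    have hdetg : gm.det = 2 * d ^ 2 := by
      simp [hgm, Matrix.det_fin_two_of]; ring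
    have hug : IsUnit gm := by
      rw [Matrix.isUnit_iff_isUnit_det, hdetg]
      exact isUnit_iff_ne_zero.mpr (mul_ne_zero h2ne (pow_ne_zero _ hdne))
    refine ⟨hug.unit, ?_, ?_⟩
    · show (hug.unit : Matrix (Fin 2) (Fin 2) K).det ^ (q+1) = 1
      rw [IsUnit.unit_spec, hdetg]; exact hdetval
    · rw [mul_inv_eq_iff_eq_mul]
      refine Units.ext ?_
      show ((hug.unit * A : Matrix.GeneralLinearGroup (Fin 2) K) : Matrix (Fin 2) (Fin 2) K)
        = ((A ^ 2 * hug.unit : Matrix.GeneralLinearGroup (Fin 2) K) : Matrix (Fin 2) (Fin 2) K)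
      rw [Units.val_mul, Units.val_mul, Units.val_pow_eq_pow_val, IsUnit.unit_spec, sq]
      show gm * M = M * M * gm
      ext i j
      fin_cases i <;> fin_cases j <;>
        simp [hgm, Matrix.mul_apply, Fin.sum_univ_two, ha, hb, hc] <;> ring
  · have hd11 : M 1 1 = 2 - M 0 0 := by
      have h1 : M 1 0 * (M 0 0 + M 1 1 - 2) = 0 := by linear_combination e10
      rcases mul_eq_zero.mp h1 with h | h
      · exact absurd h hc
      · linear_combination h
    set gm : Matrix (Fin 2) (Fin 2) K := !![d, (M 0 0 - 1)*d/(M 1 0); 0, 2*d] with hgm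
    have hdetg : gm.det = 2 * d ^ 2 := by
      simp [hgm, Matrix.det_fin_two_of]; ring
    have hug : IsUnit gm := by
      rw [Matrix.isUnit_iff_isUnit_det, hdetg]
      exact isUnit_iff_ne_zero.mpr (mul_ne_zero h2ne (pow_ne_zero _ hdne))
    refine ⟨hug.unit, ?_, ?_⟩
    · show (hug.unit : Matrix (Fin 2) (Fin 2) K).det ^ (q+1) = 1
      rw [IsUnit.unit_spec, hdetg]; exact hdetval
    · rw [mul_inv_eq_iff_eq_mul]
      refine Units.ext ?_
      show ((hug.unit * A : Matrix.GeneralLinearGroup (Fin 2) K) : Matrix (Fin 2) (Fin 2) K)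
        = ((A ^ 2 * hug.unit : Matrix.GeneralLinearGroup (Fin 2) K) : Matrix (Fin 2) (Fin 2) K)
      rw [Units.val_mul, Units.val_mul, Units.val_pow_eq_pow_val, IsUnit.unit_spec, sq]
      show gm * M = M * M * gm
      ext i j
      fin_cases i <;> fin_cases j <;>
        simp [hgm, Matrix.mul_apply, Fin.sum_univ_two, hd11]
      · field_simp
        linear_combination (-1) * e00
      · field_simp
        linear_combination (-(M 0 0 + 2)) * e00
      · ring
      · field_simp
        linear_combination (-2) * e00
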